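/- In the setting of the spin-(T/2) representation on ℂ^{T+1}, define σ_ℓ for 1 ≤ ℓ ≤ T by σ_ℓ|t⟩ = (−1)^{𝟙(t ≥ ℓ)}|t⟩, and let |v_k⟩ = e^{iπL_y/2}|k⟩. Then for any 0 ≤ k < T, max_{1 ≤ ℓ ≤ T} |⟨v_k| σ_ℓ |v_{k+1}⟩| ≥ 1/√T. -/

import Mathlib

open Matrix

/-- The spin-(T/2) raising operator on `ℂ^{T+1}`: `L₊|t⟩ = √((t+1)(T-t)) |t+1⟩`. -/
noncomputable def Lplus (T : ℕ) : Matrix (Fin (T + 1)) (Fin (T + 1)) ℂ :=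
  Matrix.of fun i j =>
    if (i : ℕ) = (j : ℕ) + 1 then
      (Real.sqrt (((j : ℕ) + 1) * ((T : ℝ) - (j : ℕ))) : ℂ)
    else 0

/-- `L_y = (L₊ - L₋)/(2i)` with `L₋ = L₊†`. -/
noncomputable def Ly (T : ℕ) : Matrix (Fin (T + 1)) (Fin (T + 1)) ℂ :=
  (2 * Complex.I)⁻¹ • (Lplus T - (Lplus T)ᴴ)

/-- The rotated basis state `|v_k⟩ = e^{iπ L_y/2} |k⟩`. -/
noncomputable def vRot (T : ℕ) (k : Fin (T + 1)) : Fin (T + 1) → ℂ :=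
  (NormedSpace.exp ((Complex.I * (Real.pi / 2 : ℝ)) • Ly T)) *ᵥ Pi.single k 1

/-- The diagonal sign operator `σ_ℓ |t⟩ = (-1)^{𝟙(t ≥ ℓ)} |t⟩`. -/
noncomputable def sigmaFlip (T ℓ : ℕ) : Matrix (Fin (T + 1)) (Fin (T + 1)) ℂ :=
  Matrix.diagonal fun t => if ℓ ≤ (t : ℕ) then (-1 : ℂ) else 1

/-! ### Auxiliary definitions -/

/-- `L_z = diag(t - T/2)`. -/
noncomputable def Dz (T : ℕ) : Matrix (Fin (T + 1)) (Fin (T + 1)) ℂ :=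
  Matrix.diagonal fun t => ((t : ℕ) : ℂ) - (T : ℂ) / 2

/-- `N₊ = L_z + i L_x`. -/
noncomputable def Nup (T : ℕ) : Matrix (Fin (T + 1)) (Fin (T + 1)) ℂ :=
  Dz T + (Complex.I / 2) • (Lplus T + (Lplus T)ᴴ)

/-- `N₋ = L_z - i L_x`. -/
noncomputable def Ndn (T : ℕ) : Matrix (Fin (T + 1)) (Fin (T + 1)) ℂ :=
  Dz T - (Complex.I / 2) • (Lplus T + (Lplus T)ᴴ)

/-! ### Commutation relations -/

lemma Dz_mul_Lplus (T : ℕ) : Dz T * Lplus T = Lplus T * Dz T + Lplus T := by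
  ext i j
  simp only [Dz, Lplus, Matrix.diagonal_mul, Matrix.mul_diagonal, Matrix.add_apply,
    Matrix.of_apply]
  split
  · rename_i h
    rw [h]
    push_cast
    ring
  · simp

lemma LplusH_mul_Dz (T : ℕ) : (Lplus T)ᴴ * Dz T = Dz T * (Lplus T)ᴴ + (Lplus T)ᴴ := by
  ext i j
  simp only [Dz, Lplus, Matrix.diagonal_mul, Matrix.mul_diagonal, Matrix.add_apply,
    Matrix.conjTranspose_apply, Matrix.of_apply, apply_ite (star : ℂ → ℂ), star_zero,
    RCLike.star_def, Complex.conj_ofReal]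
  split
  · rename_i h
    rw [h]
    push_cast
    ring
  · simp

lemma Lplus_mul_LplusH (T : ℕ) : Lplus T * (Lplus T)ᴴ
    = Matrix.diagonal (fun t : Fin (T+1) => ((t : ℕ) : ℂ) * ((T : ℂ) - (t : ℕ) + 1)) := by
  ext i j
  rw [Matrix.mul_apply]
  by_cases hij : i = j
  · subst hij
    simp only [Matrix.conjTranspose_apply, Lplus, Matrix.of_apply, Matrix.diagonal_apply_eq]
    rcases Nat.eq_zero_or_eq_succ_pred (i : ℕ) with h0 | hs
    · rw [Finset.sum_eq_zero, h0]
      · simp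
      · intro k _
        simp [h0]
    · have hm : ((i:ℕ) - 1) < T + 1 := by omega
      rw [Finset.sum_eq_single (⟨(i:ℕ) - 1, hm⟩ : Fin (T+1))]
      · have hcond : (i : ℕ) = ((⟨(i:ℕ) - 1, hm⟩ : Fin (T+1)) : ℕ) + 1 := by
          simp only []
          omega
        rw [if_pos hcond, RCLike.star_def, Complex.conj_ofReal, ← Complex.ofReal_mul,
          Real.mul_self_sqrt]
        · have hiT : (i : ℕ) ≤ T := by omega
          have : ((i:ℕ) : ℂ) - 1 + 1 = ((i:ℕ) : ℂ) := by ring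
          rw [Nat.cast_sub (by omega : 1 ≤ (i:ℕ))]
          push_cast
          ring
        · have : ((i:ℕ) - 1 : ℕ) < T := by omega
          have h1 : (0:ℝ) ≤ (((i:ℕ) - 1 : ℕ) : ℝ) + 1 := by positivity
          have h2 : (0:ℝ) ≤ (T : ℝ) - (((i:ℕ) - 1 : ℕ) : ℝ) := by
            rw [sub_nonneg]
            exact_mod_cast this.le
          exact mul_nonneg h1 h2
      · intro k _ hk
        have hkk : ¬ ((i:ℕ) = (k:ℕ) + 1) := by
          intro hcon
          exact hk (Fin.ext (by simp; omega))
        rw [if_neg hkk, zero_mul]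
      · intro h
        exact absurd (Finset.mem_univ _) h
  · have hij' : (i:ℕ) ≠ (j:ℕ) := fun h => hij (Fin.ext h)
    rw [Matrix.diagonal_apply_ne _ hij, Finset.sum_eq_zero]
    intro k _
    simp only [Matrix.conjTranspose_apply, Lplus, Matrix.of_apply]
    by_cases h1 : (i:ℕ) = (k:ℕ) + 1
    · rw [if_neg (show ¬((j:ℕ) = (k:ℕ) + 1) by omega), star_zero, mul_zero]
    · rw [if_neg h1, zero_mul]

lemma LplusH_mul_Lplus (T : ℕ) : (Lplus T)ᴴ * Lplus T
    = Matrix.diagonal (fun t : Fin (T+1) => (((t : ℕ) : ℂ) + 1) * ((T : ℂ) - (t : ℕ))) := by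
  ext i j
  rw [Matrix.mul_apply]
  by_cases hij : i = j
  · subst hij
    simp only [Matrix.conjTranspose_apply, Lplus, Matrix.of_apply, Matrix.diagonal_apply_eq]
    by_cases hiT : (i : ℕ) < T
    · have hm : ((i:ℕ) + 1) < T + 1 := by omega
      rw [Finset.sum_eq_single (⟨(i:ℕ) + 1, hm⟩ : Fin (T+1))]
      · rw [if_pos rfl, RCLike.star_def, Complex.conj_ofReal, ← Complex.ofReal_mul,
          Real.mul_self_sqrt]
        · push_cast
          ring
        · have h2 : (0:ℝ) ≤ (T : ℝ) - ((i:ℕ) : ℝ) := by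
            rw [sub_nonneg]; exact_mod_cast hiT.le
          positivity
      · intro k _ hk
        have hkk : ¬ ((k:ℕ) = (i:ℕ) + 1) := by
          intro hcon
          exact hk (Fin.ext (by simp [hcon]))
        rw [if_neg hkk, star_zero, zero_mul]
      · intro h
        exact absurd (Finset.mem_univ _) h
    · have hiT' : (i : ℕ) = T := by omega
      rw [Finset.sum_eq_zero]
      · rw [hiT']
        push_cast
        ring
      · intro k _
        by_cases h1 : (k:ℕ) = (i:ℕ) + 1
        · omega
        · rw [if_neg h1, star_zero, zero_mul]
  · have hij' : (i:ℕ) ≠ (j:ℕ) := fun h => hij (Fin.ext h)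
    rw [Matrix.diagonal_apply_ne _ hij, Finset.sum_eq_zero]
    intro k _
    simp only [Matrix.conjTranspose_apply, Lplus, Matrix.of_apply]
    by_cases h1 : (k:ℕ) = (i:ℕ) + 1
    · rw [if_neg (show ¬((k:ℕ) = (j:ℕ) + 1) by omega), mul_zero]
    · rw [if_neg h1, star_zero, zero_mul]

lemma Lplus_comm_LplusH (T : ℕ) :
    Lplus T * (Lplus T)ᴴ = (Lplus T)ᴴ * Lplus T + (2:ℂ) • Dz T := by
  rw [Lplus_mul_LplusH, LplusH_mul_Lplus, Dz]
  ext i j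
  by_cases h : i = j
  · subst h
    simp only [Matrix.add_apply, Matrix.smul_apply, Matrix.diagonal_apply_eq, smul_eq_mul]
    ring
  · simp [Matrix.diagonal_apply_ne _ h]

lemma hIinv : (2 * Complex.I)⁻¹ = -(Complex.I/2) := by
  rw [mul_inv, Complex.inv_I]; ring

lemma commNup (T : ℕ) : Ly T * Nup T = Nup T * Ly T + Nup T := by
  rw [Ly, Nup, hIinv]
  simp only [smul_mul_assoc, mul_smul_comm, add_mul, mul_add, sub_mul, mul_sub, smul_add,
    smul_sub, smul_smul, neg_smul, neg_mul, mul_neg, smul_neg, neg_neg]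
  simp only [Dz_mul_Lplus, LplusH_mul_Dz, Lplus_comm_LplusH]
  match_scalars <;> simp [Complex.ext_iff] <;> ring

lemma commNdn (T : ℕ) : Ly T * Ndn T = Ndn T * Ly T - Ndn T := by
  rw [Ly, Ndn, hIinv]
  simp only [smul_mul_assoc, mul_smul_comm, add_mul, mul_add, sub_mul, mul_sub, smul_add,
    smul_sub, smul_smul, neg_smul, neg_mul, mul_neg, smul_neg, neg_neg]
  simp only [Dz_mul_Lplus, LplusH_mul_Dz, Lplus_comm_LplusH]
  match_scalars <;> simp [Complex.ext_iff] <;> ring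

/-! ### Exponential machinery -/

lemma exp_semiconj {n : Type*} [Fintype n] [DecidableEq n] (A B N : Matrix n n ℂ)
    (h : A * N = N * B) : NormedSpace.exp A * N = N * NormedSpace.exp B := by
  letI : SeminormedRing (Matrix n n ℂ) := Matrix.linftyOpSemiNormedRing
  letI : NormedRing (Matrix n n ℂ) := Matrix.linftyOpNormedRing
  letI : NormedAlgebra ℂ (Matrix n n ℂ) := Matrix.linftyOpNormedAlgebra
  have hp : ∀ m : ℕ, A ^ m * N = N * B ^ m := by
    intro m
    induction m with
    | zero => simp
    | succ m ih => rw [pow_succ, mul_assoc, h, ← mul_assoc, ih, pow_succ, mul_assoc]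
  rw [NormedSpace.exp_eq_tsum (𝕂 := ℂ)]
  beta_reduce
  have hA := NormedSpace.expSeries_summable' (𝕂 := ℂ) A
  have hB := NormedSpace.expSeries_summable' (𝕂 := ℂ) B
  erw [← hA.tsum_mul_right N, ← hB.tsum_mul_left N]
  congr 1
  funext m
  rw [smul_mul_assoc, mul_smul_comm, hp]

lemma exp_smul_one {n : Type*} [Fintype n] [DecidableEq n] (c : ℂ) :
    NormedSpace.exp (c • (1 : Matrix n n ℂ)) = Complex.exp c • (1 : Matrix n n ℂ) := by
  have h : c • (1 : Matrix n n ℂ) = Matrix.diagonal (fun _ => c) := by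
    ext i j
    by_cases hij : i = j
    · subst hij; simp
    · simp [Matrix.one_apply_ne hij, Matrix.diagonal_apply_ne _ hij]
  rw [h, Matrix.exp_diagonal]
  ext i j
  by_cases hij : i = j
  · subst hij
    simp [Matrix.diagonal_apply_eq, Complex.exp_eq_exp_ℂ]
  · simp [Matrix.diagonal_apply_ne _ hij, Matrix.one_apply_ne hij]

lemma exp_semiconj_shift {n : Type*} [Fintype n] [DecidableEq n] (A N : Matrix n n ℂ) (c : ℂ)
    (h : A * N = N * (A + c • 1)) :
    NormedSpace.exp A * N = Complex.exp c • (N * NormedSpace.exp A) := by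
  rw [exp_semiconj A (A + c • 1) N h]
  have hc : Commute A (c • (1 : Matrix n n ℂ)) := (Commute.one_right A).smul_right c
  rw [Matrix.exp_add_of_commute A _ hc, exp_smul_one, mul_smul_comm]
  rw [mul_one, mul_smul_comm]

lemma exp_neg_mul_exp {n : Type*} [Fintype n] [DecidableEq n] (A : Matrix n n ℂ) :
    NormedSpace.exp (-A) * NormedSpace.exp A = 1 := by
  rw [← Matrix.exp_add_of_commute (-A) A (Commute.refl A).neg_left, neg_add_cancel,
    NormedSpace.exp_zero]

/-! ### The rotation conjugation -/

lemma Ly_herm (T : ℕ) : (Ly T)ᴴ = Ly T := by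
  rw [Ly, Matrix.conjTranspose_smul, Matrix.conjTranspose_sub,
    Matrix.conjTranspose_conjTranspose]
  rw [hIinv]
  match_scalars <;> simp [Complex.ext_iff] <;> ring

lemma expA_conjT (T : ℕ) :
    (NormedSpace.exp ((Complex.I * (Real.pi / 2 : ℝ)) • Ly T))ᴴ
      = NormedSpace.exp (-((Complex.I * (Real.pi / 2 : ℝ)) • Ly T)) := by
  rw [← Matrix.exp_conjTranspose]
  congr 1
  rw [Matrix.conjTranspose_smul, Ly_herm, ← neg_smul]
  congr 1
  simp [Complex.ext_iff]

lemma exp_c_eq_I : Complex.exp (Complex.I * ((Real.pi / 2 : ℝ) : ℂ)) = Complex.I := by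
  rw [mul_comm, Complex.exp_mul_I, ← Complex.ofReal_cos, ← Complex.ofReal_sin,
    Real.cos_pi_div_two, Real.sin_pi_div_two]
  simp

lemma conj_Dz (T : ℕ) :
    NormedSpace.exp (-((Complex.I * (Real.pi / 2 : ℝ)) • Ly T)) * Dz T *
        NormedSpace.exp ((Complex.I * (Real.pi / 2 : ℝ)) • Ly T)
      = (2:ℂ)⁻¹ • (Lplus T + (Lplus T)ᴴ) := by
  set c : ℂ := Complex.I * ((Real.pi / 2 : ℝ) : ℂ) with hc
  have hNup : (-(c • Ly T)) * Nup T = Nup T * ((-(c • Ly T)) + (-c) • 1) := by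
    rw [← neg_smul, smul_mul_assoc, commNup]
    rw [mul_add]
    simp only [mul_smul_comm, mul_one]
    module
  have hNdn : (-(c • Ly T)) * Ndn T = Ndn T * ((-(c • Ly T)) + c • 1) := by
    rw [← neg_smul, smul_mul_assoc, commNdn]
    rw [mul_add]
    simp only [mul_smul_comm, mul_one]
    module
  have HNup := exp_semiconj_shift _ _ _ hNup
  have HNdn := exp_semiconj_shift _ _ _ hNdn
  have hDz : Dz T = (2:ℂ)⁻¹ • (Nup T + Ndn T) := by
    rw [Nup, Ndn]; module
  rw [hDz, mul_smul_comm, smul_mul_assoc, mul_add, add_mul]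
  rw [HNup, HNdn, smul_mul_assoc, smul_mul_assoc, mul_assoc, mul_assoc,
    exp_neg_mul_exp, mul_one, mul_one]
  rw [Complex.exp_neg, exp_c_eq_I, Complex.inv_I]
  rw [Nup, Ndn]
  match_scalars <;> simp [Complex.ext_iff] <;> ring

/-! ### The sigma operators -/

lemma sigma_sum_scalar (T : ℕ) (t : Fin (T+1)) :
    ∑ ℓ ∈ Finset.Icc 1 T, (if ℓ ≤ (t:ℕ) then (-1:ℂ) else 1)
      = -2 * (((t:ℕ):ℂ) - (T:ℂ)/2) := by
  have htT : (t : ℕ) ≤ T := by omega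
  rw [Finset.sum_ite]
  have hf1 : Finset.filter (fun ℓ => ℓ ≤ (t:ℕ)) (Finset.Icc 1 T) = Finset.Icc 1 (t:ℕ) := by
    ext x
    simp only [Finset.mem_filter, Finset.mem_Icc]
    omega
  have hf2 : Finset.filter (fun ℓ => ¬ ℓ ≤ (t:ℕ)) (Finset.Icc 1 T)
      = Finset.Icc ((t:ℕ)+1) T := by
    ext x
    simp only [Finset.mem_filter, Finset.mem_Icc]
    omega
  rw [hf1, hf2, Finset.sum_const, Finset.sum_const, Nat.card_Icc, Nat.card_Icc]
  have e1 : (t:ℕ) + 1 - 1 = (t:ℕ) := by omega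
  have e2 : T + 1 - ((t:ℕ) + 1) = T - (t:ℕ) := by omega
  rw [e1, e2, nsmul_eq_mul, nsmul_eq_mul, mul_one, Nat.cast_sub htT]
  push_cast
  ring

lemma star_single (n : Type*) [DecidableEq n] (a : n) :
    star (Pi.single a (1:ℂ) : n → ℂ) = (Pi.single a (1:ℂ) : n → ℂ) := by
  ext i
  simp only [Pi.star_apply, Pi.single_apply, apply_ite (star : ℂ → ℂ), star_one, star_zero]

lemma inner_value (T k : ℕ) (hk : k < T) :
    star (vRot T ⟨k, Nat.lt_succ_of_lt hk⟩) ⬝ᵥ (((-2:ℂ) • Dz T) *ᵥ vRot T ⟨k+1, Nat.succ_lt_succ hk⟩)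
      = -((Real.sqrt ((k+1) * ((T:ℝ) - k)) : ℝ) : ℂ) := by
  rw [vRot, vRot, Matrix.star_mulVec, ← Matrix.dotProduct_mulVec, Matrix.mulVec_mulVec,
    Matrix.mulVec_mulVec, expA_conjT]
  have hassoc : NormedSpace.exp (-((Complex.I * (Real.pi / 2 : ℝ)) • Ly T)) *
        ((-2:ℂ) • Dz T) * NormedSpace.exp ((Complex.I * (Real.pi / 2 : ℝ)) • Ly T)
      = (-2:ℂ) • (NormedSpace.exp (-((Complex.I * (Real.pi / 2 : ℝ)) • Ly T)) * Dz T *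
        NormedSpace.exp ((Complex.I * (Real.pi / 2 : ℝ)) • Ly T)) := by
    rw [mul_smul_comm, smul_mul_assoc]
  rw [hassoc, conj_Dz, star_single, Matrix.mulVec_single_one, single_dotProduct, Matrix.col_apply]
  simp only [Matrix.smul_apply, Matrix.add_apply, Lplus, Matrix.conjTranspose_apply,
    Matrix.of_apply, smul_eq_mul, one_mul, mul_one]
  rw [if_neg (show ¬(k = k+1+1) by omega), if_pos trivial, RCLike.star_def,
    Complex.conj_ofReal, zero_add]
  push_cast
  ring

lemma sumInner (T k : ℕ) (hk : k < T) :
    ∑ ℓ ∈ Finset.Icc 1 T, star (vRot T ⟨k, Nat.lt_succ_of_lt hk⟩) ⬝ᵥ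
        (sigmaFlip T ℓ *ᵥ vRot T ⟨k+1, Nat.succ_lt_succ hk⟩)
      = -((Real.sqrt ((k+1) * ((T:ℝ) - k)) : ℝ) : ℂ) := by
  rw [← inner_value T k hk]
  have hD2 : (-2:ℂ) • Dz T
      = Matrix.diagonal (fun t : Fin (T+1) => (-2:ℂ) * (((t:ℕ):ℂ) - (T:ℂ)/2)) := by
    rw [Dz]
    ext i j
    by_cases h : i = j
    · subst h; simp
    · simp [Matrix.diagonal_apply_ne _ h]
  rw [hD2]
  simp only [sigmaFlip, dotProduct, Matrix.mulVec_diagonal, Pi.star_apply]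
  rw [Finset.sum_comm]
  refine Finset.sum_congr rfl fun t _ => ?_
  rw [← Finset.mul_sum, ← Finset.sum_mul, sigma_sum_scalar]

/-- `max_{1 ≤ ℓ ≤ T} |⟨v_k| σ_ℓ |v_{k+1}⟩| ≥ 1/√T` for `0 ≤ k < T`. -/
theorem sigma_matrix_element_lower_bound (T k : ℕ) (hk : k < T) :
    ∃ ℓ : ℕ, 1 ≤ ℓ ∧ ℓ ≤ T ∧
      1 / Real.sqrt T ≤
        ‖star (vRot T ⟨k, by omega⟩) ⬝ᵥ
          (sigmaFlip T ℓ *ᵥ vRot T ⟨k + 1, by omega⟩)‖ := by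
  by_contra hcon
  push_neg at hcon
  have hT1 : 1 ≤ T := by omega
  have hTpos : (0:ℝ) < Real.sqrt T := Real.sqrt_pos.mpr (by positivity)
  set f : ℕ → ℂ := fun ℓ => star (vRot T ⟨k, by omega⟩) ⬝ᵥ
      (sigmaFlip T ℓ *ᵥ vRot T ⟨k + 1, by omega⟩) with hf
  have hsum : ∑ ℓ ∈ Finset.Icc 1 T, f ℓ
      = -((Real.sqrt ((k+1) * ((T:ℝ) - k)) : ℝ) : ℂ) := sumInner T k hk
  have hlow : Real.sqrt T ≤ ‖∑ ℓ ∈ Finset.Icc 1 T, f ℓ‖ := by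
    rw [hsum, norm_neg, Complex.norm_real, Real.norm_eq_abs, abs_of_nonneg (Real.sqrt_nonneg _)]
    apply Real.sqrt_le_sqrt
    have hkT : (k:ℝ) + 1 ≤ T := by exact_mod_cast hk
    nlinarith [Nat.cast_nonneg (α := ℝ) k]
  have hup : ‖∑ ℓ ∈ Finset.Icc 1 T, f ℓ‖
      ≤ ∑ ℓ ∈ Finset.Icc 1 T, ‖f ℓ‖ := norm_sum_le _ _
  have hstrict : ∑ ℓ ∈ Finset.Icc 1 T, ‖f ℓ‖
      < ∑ _ℓ ∈ Finset.Icc 1 T, (1 / Real.sqrt T) := by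
    apply Finset.sum_lt_sum_of_nonempty
    · exact Finset.nonempty_Icc.mpr hT1
    · intro ℓ hℓ
      rw [Finset.mem_Icc] at hℓ
      exact hcon ℓ hℓ.1 hℓ.2
  have hconst : ∑ _ℓ ∈ Finset.Icc 1 T, (1 / Real.sqrt T) = Real.sqrt T := by
    rw [Finset.sum_const, Nat.card_Icc]
    simp only [nsmul_eq_mul]
    rw [Nat.add_sub_cancel, mul_one_div, Real.div_sqrt]
  rw [hconst] at hstrict
  linarith
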